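/- arXiv:2303.09023 — 5 statements merged into one kernel-verified Lean document; each statement's English description precedes it below -/
import Mathlib

section
/- Let X be a non-degenerate random variable with zero mean and finite second moment. Then the function ε ↦ L(X, ε) := inf{ var E[X | X+Y] : Y independent of X, E[Y]=0, E[Y²] ≤ ε² } is right continuous on [0, ∞). -/
open MeasureTheory ProbabilityTheory Filter

/-- The variance of the conditional expectation of the first coordinate given the sum of
the coordinates, for a joint law `π` on `ℝ × ℝ`. -/
noncomputable def cvar2 (π : Measure (ℝ × ℝ)) : ℝ :=
  variance
    (π[(fun p : ℝ × ℝ => p.1) |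
      MeasurableSpace.comap (fun p : ℝ × ℝ => p.1 + p.2) inferInstance]) π

/-- `L(X, ε)`: the infimum, over laws `ν` of mean-zero noise `Y` independent of `X`
(realized on the product space, which models an arbitrary enlargement) with `E[Y²] ≤ ε²`,
of `var E[X | X+Y]`, where `μ` is the law of `X`. -/
noncomputable def Lfun (μ : Measure ℝ) (ε : ℝ) : ℝ :=
  sInf { v : ℝ | ∃ ν : Measure ℝ, IsProbabilityMeasure ν ∧ Integrable id ν ∧
    Integrable (fun y => y ^ 2) ν ∧ (∫ y, y ∂ν) = 0 ∧ (∫ y, y ^ 2 ∂ν) ≤ ε ^ 2 ∧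
    v = cvar2 (μ.prod ν) }

open scoped ENNReal

section Helpers
variable {Ω : Type*} {m : MeasurableSpace Ω} [inst : MeasurableSpace Ω]

lemma myIntegrableMul {π : Measure Ω} {f g : Ω → ℝ}
    (hf : MemLp f 2 π) (hg : MemLp g 2 π) :
    Integrable (fun x => f x * g x) π := by
  have h1 := hf.integrable_sq
  have h2 := hg.integrable_sq
  refine ((h1.add h2).const_mul (1/2 : ℝ)).mono' (hf.1.mul hg.1) ?_
  refine ae_of_all _ fun x => ?_
  simp only [Pi.add_apply]
  rw [Real.norm_eq_abs, abs_mul]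
  nlinarith [sq_nonneg (|f x| - |g x|), abs_nonneg (f x), abs_nonneg (g x),
    sq_abs (f x), sq_abs (g x)]

lemma myMemL2Condexp (hm : m ≤ inst) (π : Measure Ω) [IsProbabilityMeasure π]
    {f : Ω → ℝ} (hf : MemLp f 2 π) : MemLp (π[f|m]) 2 π := by
  haveI : SigmaFinite (π.trim hm) := inferInstance
  set G : Ω →₂[π] ℝ := (condExpL2 ℝ ℝ hm (hf.toLp f) : Ω →₂[π] ℝ) with hG
  have h : (G : Ω → ℝ) =ᵐ[π] π[f|m] :=
    ae_eq_condExp_of_forall_setIntegral_eq hm (hf.integrable one_le_two)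
      (fun s _ hμs => integrableOn_condExpL2_of_measure_ne_top hm hμs.ne _)
      (fun s hs hμs => by
        rw [hG]
        rw [integral_condExpL2_eq (E' := ℝ) (𝕜 := ℝ) hm (hf.toLp f) hs hμs.ne]
        exact setIntegral_congr_ae (hm s hs) ((hf.coeFn_toLp).mono fun x hx _ => hx))
      (by rw [hG]; exact aestronglyMeasurable_condExpL2 hm _)
  exact (Lp.memLp G).ae_eq h

lemma myIntegralMulCondexp (hm : m ≤ inst) (π : Measure Ω) [IsProbabilityMeasure π]
    {f h : Ω → ℝ} (hf : MemLp f 2 π) (hh : MemLp h 2 π) (hhm : StronglyMeasurable[m] h) :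
    ∫ x, h x * f x ∂π = ∫ x, h x * (π[f|m]) x ∂π := by
  haveI : SigmaFinite (π.trim hm) := inferInstance
  have h1 : Integrable (h * f) π := myIntegrableMul hh hf
  have hpull : π[h * f|m] =ᵐ[π] h * π[f|m] :=
    condExp_mul_of_stronglyMeasurable_left hhm h1 (hf.integrable one_le_two)
  calc ∫ x, h x * f x ∂π = ∫ x, (h * f) x ∂π := rfl
    _ = ∫ x, (π[h * f|m]) x ∂π := (integral_condExp (μ := π) (f := h * f) hm).symm
    _ = ∫ x, (h * π[f|m]) x ∂π := integral_congr_ae hpull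
    _ = _ := rfl

lemma myCondexpOpt (hm : m ≤ inst) (π : Measure Ω) [IsProbabilityMeasure π]
    {f h : Ω → ℝ} (hf : MemLp f 2 π) (hh : MemLp h 2 π) (hhm : StronglyMeasurable[m] h) :
    ∫ x, (f x - (π[f|m]) x) ^ 2 ∂π ≤ ∫ x, (f x - h x) ^ 2 ∂π := by
  set g := π[f|m] with hgdef
  have hgm : StronglyMeasurable[m] g := stronglyMeasurable_condExp
  have hg2 : MemLp g 2 π := myMemL2Condexp hm π hf
  have hk2 : MemLp (fun x => g x - h x) 2 π := hg2.sub hh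
  have hkm : StronglyMeasurable[m] (fun x => g x - h x) := hgm.sub hhm
  have horth : ∫ x, (g x - h x) * f x ∂π = ∫ x, (g x - h x) * g x ∂π :=
    myIntegralMulCondexp hm π hf hk2 hkm
  have hfg2 : Integrable (fun x => (f x - g x) ^ 2) π := (hf.sub hg2).integrable_sq
  have hgh2 : Integrable (fun x => (g x - h x) ^ 2) π := hk2.integrable_sq
  have hcr1 : Integrable (fun x => (g x - h x) * f x) π := myIntegrableMul hk2 hf
  have hcr2 : Integrable (fun x => (g x - h x) * g x) π := myIntegrableMul hk2 hg2
  have key : ∫ x, (f x - h x) ^ 2 ∂π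
      = (∫ x, (f x - g x) ^ 2 ∂π + ∫ x, (g x - h x) ^ 2 ∂π)
        + (2 * ∫ x, (g x - h x) * f x ∂π - 2 * ∫ x, (g x - h x) * g x ∂π) := by
    rw [← integral_const_mul, ← integral_const_mul, ← integral_sub, ← integral_add, ← integral_add]
    · exact integral_congr_ae (ae_of_all _ fun x => by ring)
    · exact hfg2.add hgh2
    · exact (hcr1.const_mul 2).sub (hcr2.const_mul 2)
    · exact hfg2
    · exact hgh2
    · exact hcr1.const_mul 2
    · exact hcr2.const_mul 2
  have hnn : 0 ≤ ∫ x, (g x - h x) ^ 2 ∂π := integral_nonneg fun x => sq_nonneg _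
  rw [horth] at key
  linarith

end Helpers


section Spec

/-- the sub-σ-algebra generated by the sum -/
noncomputable def mSum : MeasurableSpace (ℝ × ℝ) :=
  MeasurableSpace.comap (fun p : ℝ × ℝ => p.1 + p.2) inferInstance

lemma cvar2_def (π : Measure (ℝ × ℝ)) :
    cvar2 π = variance (π[(fun p : ℝ × ℝ => p.1)|mSum]) π := rfl

lemma hmSum : mSum ≤ (inferInstance : MeasurableSpace (ℝ × ℝ)) :=
  measurable_iff_comap_le.mp (measurable_fst.add measurable_snd)

lemma measurable_mSum_sum : Measurable[mSum] (fun p : ℝ × ℝ => p.1 + p.2) :=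
  fun t ht => ⟨t, ht, rfl⟩

lemma sm_mSum_sum : StronglyMeasurable[mSum] (fun p : ℝ × ℝ => p.1 + p.2) :=
  measurable_mSum_sum.stronglyMeasurable

variable (μ ν : Measure ℝ) [IsProbabilityMeasure μ] [IsProbabilityMeasure ν]

lemma map_fst_eq : Measure.map Prod.fst (μ.prod ν) = μ := by simp

lemma map_snd_eq : Measure.map Prod.snd (μ.prod ν) = ν := by simp

lemma memL2_fst (hX2 : MemLp id 2 μ) : MemLp (fun p : ℝ × ℝ => p.1) 2 (μ.prod ν) := by
  have h : MemLp id 2 (Measure.map Prod.fst (μ.prod ν)) := by rw [map_fst_eq]; exact hX2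
  exact (memLp_map_measure_iff aestronglyMeasurable_id measurable_fst.aemeasurable).mp h

lemma memL2_snd (hY2 : MemLp id 2 ν) : MemLp (fun p : ℝ × ℝ => p.2) 2 (μ.prod ν) := by
  have h : MemLp id 2 (Measure.map Prod.snd (μ.prod ν)) := by rw [map_snd_eq]; exact hY2
  exact (memLp_map_measure_iff aestronglyMeasurable_id measurable_snd.aemeasurable).mp h

lemma integral_fst_eq {f : ℝ → ℝ} (hf : AEStronglyMeasurable f μ) :
    ∫ p, f p.1 ∂(μ.prod ν) = ∫ x, f x ∂μ := by
  have h : ∫ x, f x ∂μ = ∫ x, f x ∂(Measure.map Prod.fst (μ.prod ν)) := by rw [map_fst_eq]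
  rw [h, integral_map measurable_fst.aemeasurable (by rw [map_fst_eq]; exact hf)]

lemma integral_snd_eq {f : ℝ → ℝ} (hf : AEStronglyMeasurable f ν) :
    ∫ p, f p.2 ∂(μ.prod ν) = ∫ y, f y ∂ν := by
  have h : ∫ y, f y ∂ν = ∫ y, f y ∂(Measure.map Prod.snd (μ.prod ν)) := by rw [map_snd_eq]
  rw [h, integral_map measurable_snd.aemeasurable (by rw [map_snd_eq]; exact hf)]

end Spec

section Main
variable (π : Measure (ℝ × ℝ)) [IsProbabilityMeasure π]

/-- The key identity: conditional variance = second moment minus MMSE. -/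
lemma cvar2_eq (h1 : MemLp (fun p : ℝ × ℝ => p.1) 2 π)
    (h0 : ∫ p, p.1 ∂π = 0) :
    cvar2 π = ∫ p, p.1 ^ 2 ∂π
      - ∫ p, (p.1 - (π[(fun q : ℝ × ℝ => q.1)|mSum]) p) ^ 2 ∂π := by
  set X1 : ℝ × ℝ → ℝ := fun p => p.1 with hX1
  set g := π[X1|mSum] with hg
  have hg2 : MemLp g 2 π := myMemL2Condexp hmSum π h1
  have hgm : StronglyMeasurable[mSum] g := stronglyMeasurable_condExp
  have hvar : variance g π = (∫ x, g x ^ 2 ∂π) - (∫ x, g x ∂π) ^ 2 := by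
    rw [variance_eq_sub hg2]
    simp [Pi.pow_apply]
  have hgmean : ∫ x, g x ∂π = 0 := by
    rw [hg, integral_condExp hmSum, ← h0]
  have horth : ∫ x, g x * X1 x ∂π = ∫ x, g x * g x ∂π :=
    myIntegralMulCondexp hmSum π h1 hg2 hgm
  have hsq1 : Integrable (fun x => X1 x ^ 2) π := h1.integrable_sq
  have hgg : Integrable (fun x => g x * g x) π := myIntegrableMul hg2 hg2
  have hgX : Integrable (fun x => g x * X1 x) π := myIntegrableMul hg2 h1
  have hexp : ∫ x, (X1 x - g x) ^ 2 ∂π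
      = ∫ x, X1 x ^ 2 ∂π - 2 * ∫ x, g x * X1 x ∂π + ∫ x, g x * g x ∂π := by
    have e1 : ∫ x, (X1 x - g x) ^ 2 ∂π
        = ∫ x, (X1 x ^ 2 - 2 * (g x * X1 x) + g x * g x) ∂π :=
      integral_congr_ae (ae_of_all _ fun x => by ring)
    have hint1 : Integrable (fun x => X1 x ^ 2 - 2 * (g x * X1 x)) π :=
      hsq1.sub (hgX.const_mul 2)
    rw [e1, integral_add hint1 hgg, integral_sub hsq1 (hgX.const_mul 2), integral_const_mul]
  have hg2int : ∫ x, g x ^ 2 ∂π = ∫ x, g x * g x ∂π :=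
    integral_congr_ae (ae_of_all _ fun x => by ring)
  rw [cvar2_def, ← hX1, ← hg, hvar, hgmean, hg2int]
  rw [horth] at hexp
  linarith

lemma cvar2_nonneg : 0 ≤ cvar2 π := by rw [cvar2_def]; exact variance_nonneg _ _

end Main

section Bounds
variable (μ ν : Measure ℝ) [IsProbabilityMeasure μ] [IsProbabilityMeasure ν]

lemma varX_eq (hX2 : MemLp id 2 μ) (hmean : ∫ x, x ∂μ = 0) :
    variance id μ = ∫ x, x ^ 2 ∂μ := by
  rw [variance_eq_sub hX2]
  simp only [Pi.pow_apply, id_eq]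
  rw [hmean]; ring

lemma fst_mean_zero (hmean : ∫ x, x ∂μ = 0) : ∫ p, p.1 ∂(μ.prod ν) = 0 := by
  rw [integral_fst_eq μ ν (f := fun x => x) aestronglyMeasurable_id]; exact hmean

lemma fst_sq_int : ∫ p, p.1 ^ 2 ∂(μ.prod ν) = ∫ x, x ^ 2 ∂μ :=
  integral_fst_eq μ ν (f := fun x => x ^ 2) (continuous_pow 2).aestronglyMeasurable

lemma cvar2_le_var (hX2 : MemLp id 2 μ) (hmean : ∫ x, x ∂μ = 0) :
    cvar2 (μ.prod ν) ≤ variance id μ := by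
  have h1 := memL2_fst μ ν hX2
  rw [cvar2_eq _ h1 (fst_mean_zero μ ν hmean), varX_eq μ hX2 hmean, fst_sq_int μ ν]
  have : (0:ℝ) ≤ ∫ p, (p.1 - ((μ.prod ν)[(fun q : ℝ × ℝ => q.1)|mSum]) p) ^ 2 ∂(μ.prod ν) :=
    integral_nonneg fun x => sq_nonneg _
  linarith

lemma var_sub_le_cvar2 (hX2 : MemLp id 2 μ) (hmean : ∫ x, x ∂μ = 0)
    (hsq : Integrable (fun y => y ^ 2) ν) :
    variance id μ - ∫ y, y ^ 2 ∂ν ≤ cvar2 (μ.prod ν) := by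
  have hY2 : MemLp id 2 ν := (memLp_two_iff_integrable_sq aestronglyMeasurable_id).mpr hsq
  have h1 := memL2_fst μ ν hX2
  have hS2 : MemLp (fun p : ℝ × ℝ => p.1 + p.2) 2 (μ.prod ν) := h1.add (memL2_snd μ ν hY2)
  have hopt := myCondexpOpt hmSum (μ.prod ν) h1 hS2 sm_mSum_sum
  have he : ∫ p, (p.1 - (p.1 + p.2)) ^ 2 ∂(μ.prod ν) = ∫ y, y ^ 2 ∂ν := by
    rw [show (fun p : ℝ × ℝ => (p.1 - (p.1 + p.2)) ^ 2) = fun p : ℝ × ℝ => p.2 ^ 2 from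
      funext fun p => by ring]
    exact integral_snd_eq μ ν (continuous_pow 2).aestronglyMeasurable
  rw [cvar2_eq _ h1 (fst_mean_zero μ ν hmean), varX_eq μ hX2 hmean, fst_sq_int μ ν]
  rw [he] at hopt
  linarith

end Bounds

section Mixture

lemma integrable_dirac0 {f : ℝ → ℝ} (hf : Measurable f) : Integrable f (Measure.dirac (0:ℝ)) := by
  refine ⟨hf.aestronglyMeasurable, ?_⟩
  simp [HasFiniteIntegral, lintegral_dirac]

variable (μ ν : Measure ℝ) [IsProbabilityMeasure μ] [IsProbabilityMeasure ν]

lemma mixture_bound (hX2 : MemLp id 2 μ) (hmean : ∫ x, x ∂μ = 0)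
    (hid : Integrable id ν) (hsq : Integrable (fun y => y ^ 2) ν)
    (hνmean : ∫ y, y ∂ν = 0) {p : ℝ} (hp0 : 0 < p) (hp1 : p < 1) :
    ∃ ν' : Measure ℝ, IsProbabilityMeasure ν' ∧ Integrable id ν' ∧
      Integrable (fun y => y ^ 2) ν' ∧ (∫ y, y ∂ν') = 0 ∧
      (∫ y, y ^ 2 ∂ν') = p * ∫ y, y ^ 2 ∂ν ∧
      cvar2 (μ.prod ν') ≤ p * cvar2 (μ.prod ν) + (1 - p) * variance id μ := by
  set c1 : ℝ≥0∞ := ENNReal.ofReal p with hc1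
  set c2 : ℝ≥0∞ := ENNReal.ofReal (1 - p) with hc2
  have hc1_0 : c1 ≠ 0 := (ENNReal.ofReal_pos.mpr hp0).ne'
  have hc2_0 : c2 ≠ 0 := (ENNReal.ofReal_pos.mpr (by linarith)).ne'
  have hc1t : c1 ≠ ⊤ := ENNReal.ofReal_ne_top
  have hc2t : c2 ≠ ⊤ := ENNReal.ofReal_ne_top
  have htr1 : c1.toReal = p := ENNReal.toReal_ofReal hp0.le
  have htr2 : c2.toReal = 1 - p := ENNReal.toReal_ofReal (by linarith)
  set ν' : Measure ℝ := c1 • ν + c2 • Measure.dirac 0 with hν'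
  have hprob : IsProbabilityMeasure ν' := by
    constructor
    rw [hν']
    simp only [Measure.coe_add, Pi.add_apply, Measure.smul_apply, smul_eq_mul,
      measure_univ, mul_one]
    rw [← ENNReal.ofReal_add hp0.le (by linarith : (0:ℝ) ≤ 1 - p)]
    norm_num
  haveI := hprob
  -- integrability of id and sq on ν'
  have hidd : Integrable (fun y : ℝ => y) (Measure.dirac (0:ℝ)) := integrable_dirac0 measurable_id
  have hsqd : Integrable (fun y : ℝ => y ^ 2) (Measure.dirac (0:ℝ)) :=
    integrable_dirac0 (measurable_id.pow_const 2)
  have hid1 : Integrable (fun y : ℝ => y) ν := hid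
  have hid' : Integrable (fun y : ℝ => y) ν' :=
    (hid1.smul_measure hc1t).add_measure (hidd.smul_measure hc2t)
  have hsq' : Integrable (fun y : ℝ => y ^ 2) ν' :=
    (hsq.smul_measure hc1t).add_measure (hsqd.smul_measure hc2t)
  have hmean' : (∫ y, y ∂ν') = 0 := by
    rw [hν', integral_add_measure (hid1.smul_measure hc1t) (hidd.smul_measure hc2t),
      integral_smul_measure, integral_smul_measure, integral_dirac, hνmean]
    simp
  have hsqint : (∫ y, y ^ 2 ∂ν') = p * ∫ y, y ^ 2 ∂ν := by
    rw [hν', integral_add_measure (hsq.smul_measure hc1t) (hsqd.smul_measure hc2t),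
      integral_smul_measure, integral_smul_measure, integral_dirac, htr1, htr2]
    norm_num
  -- convexity of the product measure
  set π1 := μ.prod ν with hπ1
  set π0 := μ.prod (Measure.dirac (0:ℝ)) with hπ0
  set π2 := μ.prod ν' with hπ2
  have hconv : π2 = c1 • π1 + c2 • π0 := by
    rw [hπ2]
    refine Measure.prod_eq fun s t hs ht => ?_
    simp only [Measure.coe_add, Pi.add_apply, Measure.smul_apply, smul_eq_mul,
      hπ1, hπ0, Measure.prod_prod, hν']
    ring
  -- conditional expectation on π2
  have hX1π2 : MemLp (fun q : ℝ × ℝ => q.1) 2 π2 := memL2_fst μ ν' hX2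
  have hX1π1 : MemLp (fun q : ℝ × ℝ => q.1) 2 π1 := memL2_fst μ ν hX2
  have hX1π0 : MemLp (fun q : ℝ × ℝ => q.1) 2 π0 := memL2_fst μ (Measure.dirac (0:ℝ)) hX2
  set g2 := π2[(fun q : ℝ × ℝ => q.1)|mSum] with hg2
  have hg2m : StronglyMeasurable[mSum] g2 := stronglyMeasurable_condExp
  have hg2sm : StronglyMeasurable g2 := hg2m.mono hmSum
  have hg2L2 : MemLp g2 2 π2 := myMemL2Condexp hmSum π2 hX1π2
  have hle1 : c1 • π1 ≤ π2 := by
    rw [hconv]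
    refine Measure.le_iff.mpr fun s hs => ?_
    rw [Measure.add_apply]; exact le_self_add
  have hle0 : c2 • π0 ≤ π2 := by
    rw [hconv]
    refine Measure.le_iff.mpr fun s hs => ?_
    rw [Measure.add_apply]; exact le_add_self
  have hsq2 : Integrable (fun x => g2 x ^ 2) π2 := hg2L2.integrable_sq
  have hg2L2_1 : MemLp g2 2 π1 :=
    (memLp_two_iff_integrable_sq hg2sm.aestronglyMeasurable).mpr
      ((integrable_smul_measure hc1_0 hc1t).mp (hsq2.mono_measure hle1))
  have hg2L2_0 : MemLp g2 2 π0 :=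
    (memLp_two_iff_integrable_sq hg2sm.aestronglyMeasurable).mpr
      ((integrable_smul_measure hc2_0 hc2t).mp (hsq2.mono_measure hle0))
  -- decomposition of the MSE of g2
  have hF2 : Integrable (fun x => ((fun q : ℝ × ℝ => q.1) x - g2 x) ^ 2) π2 :=
    (hX1π2.sub hg2L2).integrable_sq
  have hF1 : Integrable (fun x => ((fun q : ℝ × ℝ => q.1) x - g2 x) ^ 2) π1 :=
    (hX1π1.sub hg2L2_1).integrable_sq
  have hF0 : Integrable (fun x => ((fun q : ℝ × ℝ => q.1) x - g2 x) ^ 2) π0 :=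
    (hX1π0.sub hg2L2_0).integrable_sq
  have hdec : ∫ x, ((fun q : ℝ × ℝ => q.1) x - g2 x) ^ 2 ∂π2
      = p * ∫ x, ((fun q : ℝ × ℝ => q.1) x - g2 x) ^ 2 ∂π1
        + (1 - p) * ∫ x, ((fun q : ℝ × ℝ => q.1) x - g2 x) ^ 2 ∂π0 := by
    rw [hconv, integral_add_measure (hF1.smul_measure hc1t) (hF0.smul_measure hc2t),
      integral_smul_measure, integral_smul_measure, htr1, htr2, smul_eq_mul, smul_eq_mul]
  have hopt1 : ∫ x, ((fun q : ℝ × ℝ => q.1) x - (π1[(fun q : ℝ × ℝ => q.1)|mSum]) x) ^ 2 ∂π1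
      ≤ ∫ x, ((fun q : ℝ × ℝ => q.1) x - g2 x) ^ 2 ∂π1 :=
    myCondexpOpt hmSum π1 hX1π1 hg2L2_1 hg2m
  have hF0nn : 0 ≤ ∫ x, ((fun q : ℝ × ℝ => q.1) x - g2 x) ^ 2 ∂π0 :=
    integral_nonneg fun x => sq_nonneg _
  -- put it together
  have hcv2 : cvar2 π2 = ∫ q, q.1 ^ 2 ∂π2 - ∫ x, ((fun q : ℝ × ℝ => q.1) x - g2 x) ^ 2 ∂π2 :=
    cvar2_eq π2 hX1π2 (fst_mean_zero μ ν' hmean)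
  have hcv1 : cvar2 π1 = ∫ q, q.1 ^ 2 ∂π1
      - ∫ x, ((fun q : ℝ × ℝ => q.1) x - (π1[(fun q : ℝ × ℝ => q.1)|mSum]) x) ^ 2 ∂π1 :=
    cvar2_eq π1 hX1π1 (fst_mean_zero μ ν hmean)
  have hV : variance id μ = ∫ x, x ^ 2 ∂μ := varX_eq μ hX2 hmean
  have hm2 : ∫ q, q.1 ^ 2 ∂π2 = ∫ x, x ^ 2 ∂μ := fst_sq_int μ ν'
  have hm1 : ∫ q, q.1 ^ 2 ∂π1 = ∫ x, x ^ 2 ∂μ := fst_sq_int μ ν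
  refine ⟨ν', hprob, hid', hsq', hmean', hsqint, ?_⟩
  have hmul := mul_le_mul_of_nonneg_left hopt1 hp0.le
  nlinarith [hF0nn, hp1]
end Mixture


section Final

def NSet (μ : Measure ℝ) (ε : ℝ) : Set ℝ :=
  { v : ℝ | ∃ ν : Measure ℝ, IsProbabilityMeasure ν ∧ Integrable id ν ∧
    Integrable (fun y => y ^ 2) ν ∧ (∫ y, y ∂ν) = 0 ∧ (∫ y, y ^ 2 ∂ν) ≤ ε ^ 2 ∧
    v = cvar2 (μ.prod ν) }

lemma Lfun_eq (μ : Measure ℝ) (ε : ℝ) : Lfun μ ε = sInf (NSet μ ε) := rfl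

variable (μ : Measure ℝ) [IsProbabilityMeasure μ]

lemma NSet_bounds (hX2 : MemLp id 2 μ) (hmean : ∫ x, x ∂μ = 0) (ε : ℝ) {v : ℝ}
    (hv : v ∈ NSet μ ε) :
    (variance id μ - ε ^ 2 ≤ v ∧ v ≤ variance id μ) ∧ 0 ≤ v := by
  obtain ⟨ν, hprobν, hidν, hsqν, hmeanν, hsqle, rfl⟩ := hv
  haveI := hprobν
  refine ⟨⟨le_trans (by linarith [var_sub_le_cvar2 μ ν hX2 hmean hsqν]) le_rfl, ?_⟩, ?_⟩
  · exact cvar2_le_var μ ν hX2 hmean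
  · exact cvar2_nonneg _

lemma dirac_mem_NSet (ε : ℝ) : cvar2 (μ.prod (Measure.dirac (0:ℝ))) ∈ NSet μ ε := by
  refine ⟨Measure.dirac (0:ℝ), inferInstance, integrable_dirac0 measurable_id,
    integrable_dirac0 (measurable_id.pow_const 2), ?_, ?_, rfl⟩
  · rw [show (fun y : ℝ => y) = id from rfl]; rw [integral_dirac]; rfl
  · rw [integral_dirac]
    simpa using sq_nonneg ε

lemma NSet_bddBelow (ε : ℝ) (hX2 : MemLp id 2 μ) (hmean : ∫ x, x ∂μ = 0) :
    BddBelow (NSet μ ε) :=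
  ⟨0, fun _ hv => (NSet_bounds μ hX2 hmean ε hv).2⟩

lemma NSet_nonempty (ε : ℝ) : (NSet μ ε).Nonempty := ⟨_, dirac_mem_NSet μ ε⟩

theorem stmt9' (hX2 : MemLp id 2 μ) (hmean : ∫ x, x ∂μ = 0) (hnd : 0 < variance id μ) :
    ∀ ε : ℝ, 0 ≤ ε → ContinuousWithinAt (Lfun μ) (Set.Ici ε) ε := by
  intro ε hε
  set V := variance id μ with hVd
  have hbdd : ∀ δ : ℝ, BddBelow (NSet μ δ) := fun δ => NSet_bddBelow μ δ hX2 hmean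
  have hne : ∀ δ : ℝ, (NSet μ δ).Nonempty := NSet_nonempty μ
  have hmono : ∀ δ1 δ2 : ℝ, 0 ≤ δ1 → δ1 ≤ δ2 → Lfun μ δ2 ≤ Lfun μ δ1 := by
    intro δ1 δ2 h1 h2
    rw [Lfun_eq, Lfun_eq]
    refine csInf_le_csInf (hbdd δ2) (hne δ1) ?_
    rintro v ⟨ν, hp1, hp2, hp3, hp4, hp5, hp6⟩
    exact ⟨ν, hp1, hp2, hp3, hp4, le_trans hp5 (pow_le_pow_left₀ h1 h2 2), hp6⟩
  have hLlb : ∀ δ : ℝ, V - δ ^ 2 ≤ Lfun μ δ := fun δ =>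
    le_csInf (hne δ) fun v hv => (NSet_bounds μ hX2 hmean δ hv).1.1
  have hLnn : ∀ δ : ℝ, 0 ≤ Lfun μ δ := fun δ =>
    le_csInf (hne δ) fun v hv => (NSet_bounds μ hX2 hmean δ hv).2
  have hLub : ∀ δ : ℝ, Lfun μ δ ≤ V := fun δ =>
    (csInf_le (hbdd δ) (dirac_mem_NSet μ δ)).trans (cvar2_le_var μ _ hX2 hmean)
  rcases eq_or_lt_of_le hε with hε0 | hε0
  · -- ε = 0
    subst hε0
    show Tendsto (Lfun μ) (nhdsWithin 0 (Set.Ici 0)) (nhds (Lfun μ 0))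
    refine tendsto_of_tendsto_of_tendsto_of_le_of_le'
      (g := fun x : ℝ => Lfun μ 0 - x ^ 2) (h := fun _ : ℝ => Lfun μ 0) ?_ ?_ ?_ ?_
    · have h : Tendsto (fun x : ℝ => Lfun μ 0 - x ^ 2) (nhds 0) (nhds (Lfun μ 0 - 0 ^ 2)) :=
        (continuous_const.sub (continuous_pow 2)).tendsto 0
      simpa using h.mono_left nhdsWithin_le_nhds
    · exact tendsto_const_nhds
    · filter_upwards [self_mem_nhdsWithin] with x hx
      have h1 := hLlb x
      have h2 := hLub 0
      linarith
    · filter_upwards [self_mem_nhdsWithin] with x hx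
      exact hmono 0 x le_rfl hx
  · -- ε > 0
    have hkey : ∀ x : ℝ, ε < x →
        Lfun μ ε ≤ (ε ^ 2 / x ^ 2) * Lfun μ x + (1 - ε ^ 2 / x ^ 2) * V := by
      intro x hx
      have hx0 : (0:ℝ) < x := lt_trans hε0 hx
      have hx2 : (0:ℝ) < x ^ 2 := pow_pos hx0 2
      set q : ℝ := ε ^ 2 / x ^ 2 with hq
      have hq0 : 0 < q := div_pos (pow_pos hε0 2) hx2
      have hq1 : q < 1 := (div_lt_one hx2).mpr (by nlinarith)
      have hstep : ∀ v ∈ NSet μ x, (Lfun μ ε - (1 - q) * V) / q ≤ v := by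
        rintro v ⟨ν, hprobν, hidν, hsqν, hmeanν, hsqle, rfl⟩
        haveI := hprobν
        obtain ⟨ν', h1, h2, h3, h4, h5, h6⟩ :=
          mixture_bound μ ν hX2 hmean hidν hsqν hmeanν hq0 hq1
        have hmem : cvar2 (μ.prod ν') ∈ NSet μ ε := by
          refine ⟨ν', h1, h2, h3, h4, ?_, rfl⟩
          rw [h5]
          calc q * ∫ y, y ^ 2 ∂ν ≤ q * x ^ 2 := by
                exact mul_le_mul_of_nonneg_left hsqle hq0.le
            _ = ε ^ 2 := by rw [hq]; field_simp
        have hLe : Lfun μ ε ≤ cvar2 (μ.prod ν') := by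
          rw [Lfun_eq]; exact csInf_le (hbdd ε) hmem
        rw [div_le_iff₀ hq0]
        nlinarith
      have h := le_csInf (hne x) hstep
      rw [← Lfun_eq, div_le_iff₀ hq0] at h
      nlinarith
    show Tendsto (Lfun μ) (nhdsWithin ε (Set.Ici ε)) (nhds (Lfun μ ε))
    refine tendsto_of_tendsto_of_tendsto_of_le_of_le'
      (g := fun x : ℝ => Lfun μ ε - (1 - ε ^ 2 / x ^ 2) * V) (h := fun _ : ℝ => Lfun μ ε)
      ?_ ?_ ?_ ?_
    · have hc : ContinuousAt (fun x : ℝ => Lfun μ ε - (1 - ε ^ 2 / x ^ 2) * V) ε := by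
        have h2 : ContinuousAt (fun x : ℝ => x ^ 2) ε := (continuous_pow 2).continuousAt
        exact continuousAt_const.sub
          ((continuousAt_const.sub (continuousAt_const.div h2 (pow_ne_zero 2 hε0.ne'))).mul
            continuousAt_const)
      have h := hc.continuousWithinAt (s := Set.Ici ε)
      have hval : Lfun μ ε - (1 - ε ^ 2 / ε ^ 2) * V = Lfun μ ε := by
        rw [div_self (pow_ne_zero 2 hε0.ne')]; ring
      rw [ContinuousWithinAt, hval] at h
      exact h
    · exact tendsto_const_nhds
    · filter_upwards [self_mem_nhdsWithin] with x hx
      rcases eq_or_lt_of_le (Set.mem_Ici.mp hx) with rfl | hlt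
      · rw [div_self (pow_ne_zero 2 hε0.ne')]; simp
      · have h := hkey x hlt
        have hq1 : ε ^ 2 / x ^ 2 ≤ 1 := by
          have hx2 : (0:ℝ) < x ^ 2 := pow_pos (lt_trans hε0 hlt) 2
          exact le_of_lt ((div_lt_one hx2).mpr (by nlinarith))
        have hq0 : 0 ≤ ε ^ 2 / x ^ 2 := div_nonneg (sq_nonneg ε) (sq_nonneg x)
        nlinarith [hLnn x]
    · filter_upwards [self_mem_nhdsWithin] with x hx
      exact hmono ε x hε hx

end Final

/-- For non-degenerate mean-zero square-integrable `X` (law `mu`), the function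
`eps -> L(X, eps)` is right continuous on `[0, +oo)`. -/
theorem stmt9 (μ : Measure ℝ) [IsProbabilityMeasure μ]
    (hX2 : MemLp id 2 μ) (hmean : ∫ x, x ∂μ = 0) (hnd : 0 < variance id μ) :
    ∀ ε : ℝ, 0 ≤ ε → ContinuousWithinAt (Lfun μ) (Set.Ici ε) ε := by
  exact stmt9' μ hX2 hmean hnd
end

section
/- If X is independent of Y and Z is a non-degenerate Gaussian random variable independent of σ(X,Y), and E[X | X+Y+Z] = E[X | X+Y] almost surely with E[X]=0, E[X²] < ∞, then E[X | X+Y+Z] = 0 almost surely and hence E[X²] = 0, i.e. X = 0 a.s. -/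
open MeasureTheory ProbabilityTheory Filter

/-- If `X` independent of `Y`, `Z` non-degenerate Gaussian independent of `(X,Y)`, `X`
mean zero square-integrable, and `E[X|X+Y+Z] = E[X|X+Y]` a.s., then `E[X|X+Y+Z] = 0` a.s.
and `E[X^2] = 0`, i.e. `X = 0` a.s. -/
theorem stmt10 {Ω : Type*} [MeasurableSpace Ω] (P : Measure Ω) [IsProbabilityMeasure P]
    (X Y Z : Ω → ℝ) (hXm : Measurable X) (hYm : Measurable Y) (hZm : Measurable Z)
    (hX2 : MemLp X 2 P) (hXmean : ∫ ω, X ω ∂P = 0)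
    (hY1 : Integrable Y P) (hZ1 : Integrable Z P)
    (hXY : IndepFun X Y P)
    (hZXY : IndepFun Z (fun ω => (X ω, Y ω)) P)
    (m : ℝ) (v : NNReal) (hv : v ≠ 0) (hZgauss : Measure.map Z P = gaussianReal m v)
    (heq : P[X | MeasurableSpace.comap (fun ω => X ω + Y ω + Z ω) inferInstance]
      =ᵐ[P] P[X | MeasurableSpace.comap (fun ω => X ω + Y ω) inferInstance]) :
    (P[X | MeasurableSpace.comap (fun ω => X ω + Y ω + Z ω) inferInstance]
      =ᵐ[P] fun _ => (0 : ℝ)) ∧ (∫ ω, X ω ^ 2 ∂P = 0) ∧ X =ᵐ[P] fun _ => (0 : ℝ) := by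
  set S : Ω → ℝ := fun ω => X ω + Y ω with hSdef
  set T : Ω → ℝ := fun ω => X ω + Y ω + Z ω with hTdef
  have hSm : Measurable S := hXm.add hYm
  have hTm : Measurable T := hSm.add hZm
  have hmT : MeasurableSpace.comap T inferInstance ≤ (inferInstance : MeasurableSpace Ω) :=
    hTm.comap_le
  have hmS : MeasurableSpace.comap S inferInstance ≤ (inferInstance : MeasurableSpace Ω) :=
    hSm.comap_le
  have hX1 : Integrable X P := hX2.integrable one_le_two
  -- factorizations via condDistrib
  have h1 : P[X | MeasurableSpace.comap T inferInstance] =ᵐ[P]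
      fun ω => ∫ y, y ∂condDistrib X T P (T ω) :=
    condExp_ae_eq_integral_condDistrib' hTm hX1
  have h2 : P[X | MeasurableSpace.comap S inferInstance] =ᵐ[P]
      fun ω => ∫ y, y ∂condDistrib X S P (S ω) :=
    condExp_ae_eq_integral_condDistrib' hSm hX1
  set f₁ : ℝ → ℝ := fun t => ∫ y, y ∂condDistrib X T P t with hf₁def
  set g : ℝ → ℝ := fun s => ∫ y, y ∂condDistrib X S P s with hgdef
  have hym : StronglyMeasurable (Function.uncurry fun (_ : ℝ) (y : ℝ) => y) :=
    measurable_snd.stronglyMeasurable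
  have hf₁m : Measurable f₁ := hym.integral_kernel_prod_right.measurable
  have hgm : Measurable g := hym.integral_kernel_prod_right.measurable
  -- the key a.e. identity
  have heq' : (fun ω => f₁ (S ω + Z ω)) =ᵐ[P] fun ω => g (S ω) :=
    h1.symm.trans (heq.trans h2)
  -- independence of S and Z
  have hZS : IndepFun Z S P := by
    have h := hZXY.comp measurable_id ((measurable_fst.add measurable_snd) :
      Measurable fun p : ℝ × ℝ => p.1 + p.2)
    exact h
  have hZX : IndepFun Z X P := by
    have h := hZXY.comp measurable_id (measurable_fst : Measurable fun p : ℝ × ℝ => p.1)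
    exact h
  have hmap : Measure.map (fun ω => (S ω, Z ω)) P
      = (Measure.map S P).prod (Measure.map Z P) :=
    (indepFun_iff_map_prod_eq_prod_map_map hSm.aemeasurable hZm.aemeasurable).mp hZS.symm
  -- null set in the product
  have hAc : MeasurableSet {p : ℝ × ℝ | f₁ (p.1 + p.2) = g p.1} :=
    measurableSet_eq_fun (hf₁m.comp (measurable_fst.add measurable_snd))
      (hgm.comp measurable_fst)
  have hnull : ((Measure.map S P).prod (gaussianReal m v))
      {p : ℝ × ℝ | f₁ (p.1 + p.2) = g p.1}ᶜ = 0 := by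
    rw [← hZgauss, ← hmap,
      Measure.map_apply (hSm.prodMk hZm) hAc.compl]
    exact heq'
  have hfib := (Measure.measure_prod_null (μ := Measure.map S P)
    (ν := gaussianReal m v) hAc.compl).mp hnull
  -- for a.e. s, f₁ equals the constant g s Lebesgue-a.e.
  have hvol : ∀ᵐ s ∂(Measure.map S P), volume {t : ℝ | ¬ f₁ t = g s} = 0 := by
    filter_upwards [hfib] with s hs
    have hg0 : gaussianReal m v {z : ℝ | ¬ f₁ (s + z) = g s} = 0 := hs
    have hv0 : volume {z : ℝ | ¬ f₁ (s + z) = g s} = 0 :=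
      gaussianReal_absolutelyContinuous' m hv hg0
    have hpre : (fun z : ℝ => s + z) ⁻¹' {t : ℝ | ¬ f₁ t = g s}
        = {z : ℝ | ¬ f₁ (s + z) = g s} := rfl
    have := measure_preimage_add (volume : Measure ℝ) s {t : ℝ | ¬ f₁ t = g s}
    rw [hpre] at this
    rw [← this]
    exact hv0
  haveI : IsProbabilityMeasure (Measure.map S P) :=
    Measure.isProbabilityMeasure_map hSm.aemeasurable
  haveI : (ae (Measure.map S P)).NeBot :=
    ae_neBot.mpr (IsProbabilityMeasure.ne_zero _)
  obtain ⟨s₀, hs₀⟩ := hvol.exists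
  -- g is a.e. constant equal to g s₀
  have hgc : ∀ᵐ s ∂(Measure.map S P), g s = g s₀ := by
    filter_upwards [hvol] with s hs
    have hu : volume ({t : ℝ | ¬ f₁ t = g s} ∪ {t : ℝ | ¬ f₁ t = g s₀}) = 0 :=
      measure_union_null hs hs₀
    have hne : ({t : ℝ | ¬ f₁ t = g s} ∪ {t : ℝ | ¬ f₁ t = g s₀}) ≠ Set.univ := by
      intro hU
      rw [hU, Real.volume_univ] at hu
      exact ENNReal.top_ne_zero hu
    obtain ⟨t, ht⟩ := Set.ne_univ_iff_exists_notMem _ |>.mp hne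
    simp only [Set.mem_union, Set.mem_setOf_eq, not_or, not_not] at ht
    rw [← ht.1, ht.2]
  -- conditional expectations are a.e. the constant g s₀
  have h2c : P[X | MeasurableSpace.comap S inferInstance] =ᵐ[P] fun _ => g s₀ :=
    h2.trans (ae_of_ae_map hSm.aemeasurable hgc)
  have hTc : P[X | MeasurableSpace.comap T inferInstance] =ᵐ[P] fun _ => g s₀ :=
    heq.trans h2c
  -- the constant is 0
  have hc0 : g s₀ = 0 := by
    have hint : ∫ ω, (P[X | MeasurableSpace.comap T inferInstance]) ω ∂P = ∫ ω, X ω ∂P :=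
      integral_condExp hmT
    rw [integral_congr_ae hTc, hXmean, integral_const, probReal_univ,
      one_smul] at hint
    exact hint
  have hT0 : P[X | MeasurableSpace.comap T inferInstance] =ᵐ[P] fun _ => (0 : ℝ) := by
    filter_upwards [hTc] with ω hω
    rw [hω, hc0]
  refine ⟨hT0, ?_⟩
  -- second moment
  have hXX : Integrable (fun ω => X ω * X ω) P := by
    have := hX2.integrable_sq
    simpa [pow_two] using this
  have hYX : Integrable (fun ω => Y ω * X ω) P := hXY.symm.integrable_mul hY1 hX1
  have hZX1 : Integrable (fun ω => Z ω * X ω) P := hZX.integrable_mul hZ1 hX1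
  have hTXeq : (fun ω => T ω * X ω)
      = fun ω => X ω * X ω + Y ω * X ω + Z ω * X ω := by
    funext ω; simp only [hTdef]; ring
  have hTX : Integrable (fun ω => T ω * X ω) P := by
    rw [hTXeq]; exact (hXX.add hYX).add hZX1
  have hTsm : StronglyMeasurable[MeasurableSpace.comap T inferInstance] T :=
    (comap_measurable T).stronglyMeasurable
  have hmul : P[T * X | MeasurableSpace.comap T inferInstance]
      =ᵐ[P] T * P[X | MeasurableSpace.comap T inferInstance] :=
    condExp_mul_of_stronglyMeasurable_left hTsm hTX hX1
  have hintTX : ∫ ω, T ω * X ω ∂P = 0 := by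
    have h1' : ∫ ω, (T * X) ω ∂P = ∫ ω, (P[T * X | MeasurableSpace.comap T inferInstance]) ω ∂P :=
      (integral_condExp hmT).symm
    have h2' : ∫ ω, (P[T * X | MeasurableSpace.comap T inferInstance]) ω ∂P = 0 := by
      have : (P[T * X | MeasurableSpace.comap T inferInstance]) =ᵐ[P] fun _ => (0 : ℝ) := by
        filter_upwards [hmul, hT0] with ω h₁ h₂
        rw [h₁]
        simp only [Pi.mul_apply, h₂, mul_zero]
      rw [integral_congr_ae this, integral_zero]
    calc ∫ ω, T ω * X ω ∂P = ∫ ω, (T * X) ω ∂P := rfl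
    _ = 0 := h1'.trans h2'
  have hYX0 : ∫ ω, Y ω * X ω ∂P = 0 := by
    have h := hXY.symm.integral_fun_mul_eq_mul_integral hY1.aestronglyMeasurable hX1.aestronglyMeasurable
    rw [hXmean, mul_zero] at h
    exact h
  have hZX0 : ∫ ω, Z ω * X ω ∂P = 0 := by
    have h := hZX.integral_fun_mul_eq_mul_integral hZ1.aestronglyMeasurable hX1.aestronglyMeasurable
    rw [hXmean, mul_zero] at h
    exact h
  have hXX0 : ∫ ω, X ω * X ω ∂P = 0 := by
    have hsum : ∫ ω, T ω * X ω ∂P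
        = ∫ ω, X ω * X ω ∂P + ∫ ω, Y ω * X ω ∂P + ∫ ω, Z ω * X ω ∂P := by
      rw [show (fun ω => T ω * X ω) = fun ω => X ω * X ω + Y ω * X ω + Z ω * X ω from hTXeq]
      have e1 : Integrable (fun ω => X ω * X ω + Y ω * X ω) P := hXX.add hYX
      rw [integral_add e1 hZX1, integral_add hXX hYX]
    rw [hintTX, hYX0, hZX0, add_zero, add_zero] at hsum
    exact hsum.symm
  have hsq0 : ∫ ω, X ω ^ 2 ∂P = 0 := by
    simpa [pow_two] using hXX0
  refine ⟨hsq0, ?_⟩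
  have hsqint : Integrable (fun ω => X ω ^ 2) P := hX2.integrable_sq
  have := (integral_eq_zero_iff_of_nonneg_ae
    (ae_of_all _ fun ω => sq_nonneg (X ω)) hsqint).mp hsq0
  filter_upwards [this] with ω hω
  have h2 : X ω * X ω = 0 := by simpa [pow_two] using hω
  simpa using mul_self_eq_zero.mp h2
end

section
/- If (U_n, W_n) → (U, W) almost surely with sup_n E[U_n²] = M < ∞ and E[U²] ≤ M, then for every bounded continuous function h: ℝ → ℝ, lim_n E[h(U_n + W_n) · E[U_n | U_n + W_n]] = E[h(U+W) · E[U | U+W]]. -/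
open MeasureTheory ProbabilityTheory Filter


lemma myKeyEq {Ω : Type*} [mΩ : MeasurableSpace Ω] (P : Measure Ω) [IsProbabilityMeasure P]
    (U S : Ω → ℝ) (hU : Measurable U) (hS : Measurable S) (hU2 : MemLp U 2 P)
    (h : BoundedContinuousFunction ℝ ℝ) :
    ∫ ω, h (S ω) * (P[U | MeasurableSpace.comap S inferInstance]) ω ∂P
      = ∫ ω, h (S ω) * U ω ∂P := by
  set m := MeasurableSpace.comap S inferInstance with hm_def
  have hm : m ≤ mΩ := hS.comap_le
  have hSm : Measurable[m] S := Measurable.of_comap_le le_rfl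
  have hg_sm : StronglyMeasurable[m] (fun ω => h (S ω)) :=
    (h.continuous.measurable.comp hSm).stronglyMeasurable
  have hint : Integrable U P := hU2.integrable one_le_two
  have hbd : ∀ᵐ ω ∂P, ‖h (S ω)‖ ≤ ‖h‖ :=
    Filter.Eventually.of_forall fun ω => h.norm_coe_le_norm (S ω)
  have hmul := condExp_stronglyMeasurable_mul_of_bound hm hg_sm hint ‖h‖ hbd
  have hprod : Integrable (fun ω => h (S ω) * U ω) P :=
    hint.bdd_mul (hg_sm.mono hm).aestronglyMeasurable hbd
  calc ∫ ω, h (S ω) * (P[U | m]) ω ∂P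
      = ∫ ω, (P[(fun ω => h (S ω)) * U | m]) ω ∂P := (integral_congr_ae hmul).symm
    _ = ∫ ω, h (S ω) * U ω ∂P := integral_condExp hm

lemma myUI {Ω : Type*} [MeasurableSpace Ω] (P : Measure Ω) [IsProbabilityMeasure P]
    {f : ℕ → Ω → ℝ} (hfm : ∀ n, AEStronglyMeasurable (f n) P)
    (hf2 : ∀ n, MemLp (f n) 2 P) (K : ℝ) (hK : ∀ n, ∫ ω, (f n ω) ^ 2 ∂P ≤ K) :
    UnifIntegrable f 1 P := by
  have hK0 : 0 ≤ K := le_trans (integral_nonneg fun ω => sq_nonneg _) (hK 0)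
  refine unifIntegrable_of le_rfl ENNReal.one_ne_top hfm fun ε hε => ?_
  set C : NNReal := (K / ε).toNNReal + 1 with hC_def
  have hC1 : (1 : ℝ) ≤ (C : ℝ) := by
    simp [hC_def]
  have hCpos : (0 : ℝ) < (C : ℝ) := lt_of_lt_of_le one_pos hC1
  have hKC : K / (C : ℝ) ≤ ε := by
    rw [div_le_iff₀ hCpos]
    have : K / ε ≤ (C : ℝ) := by
      simp only [hC_def, NNReal.coe_add, NNReal.coe_one, Real.coe_toNNReal']
      calc K / ε ≤ max (K / ε) 0 := le_max_left _ _
        _ ≤ max (K / ε) 0 + 1 := by linarith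
    calc K = (K / ε) * ε := by field_simp
      _ ≤ (C : ℝ) * ε := by
          exact mul_le_mul_of_nonneg_right this hε.le
      _ = ε * C := mul_comm _ _
  refine ⟨C, fun i => ?_⟩
  have hptw : ∀ ω, (‖({x | C ≤ ‖f i x‖₊}.indicator (f i)) ω‖₊ : ENNReal)
      ≤ ENNReal.ofReal ((f i ω) ^ 2 / (C : ℝ)) := by
    intro ω
    rw [← enorm_eq_nnnorm, ← ofReal_norm]
    apply ENNReal.ofReal_le_ofReal
    by_cases hω : ω ∈ {x | C ≤ ‖f i x‖₊}
    · rw [Set.indicator_of_mem hω]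
      have hCf : (C : ℝ) ≤ |f i ω| := by
        have := hω
        simp only [Set.mem_setOf_eq] at this
        calc (C : ℝ) ≤ (‖f i ω‖₊ : ℝ) := NNReal.coe_le_coe.mpr this
          _ = |f i ω| := by rw [coe_nnnorm, Real.norm_eq_abs]
      rw [Real.norm_eq_abs, le_div_iff₀ hCpos]
      calc |f i ω| * (C : ℝ) ≤ |f i ω| * |f i ω| :=
            mul_le_mul_of_nonneg_left hCf (abs_nonneg _)
        _ = (f i ω) ^ 2 := by rw [← abs_mul, ← sq, abs_sq]
    · rw [Set.indicator_of_notMem hω]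
      simp only [norm_zero]
      positivity
  have hint_sq : Integrable (fun ω => (f i ω) ^ 2 / (C : ℝ)) P :=
    ((hf2 i).integrable_sq).div_const _
  calc eLpNorm ({x | C ≤ ‖f i x‖₊}.indicator (f i)) 1 P
      = ∫⁻ ω, (‖({x | C ≤ ‖f i x‖₊}.indicator (f i)) ω‖₊ : ENNReal) ∂P := by
        rw [eLpNorm_one_eq_lintegral_enorm]
        rfl
    _ ≤ ∫⁻ ω, ENNReal.ofReal ((f i ω) ^ 2 / (C : ℝ)) ∂P := lintegral_mono hptw
    _ = ENNReal.ofReal (∫ ω, (f i ω) ^ 2 / (C : ℝ) ∂P) :=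
        (ofReal_integral_eq_lintegral_ofReal hint_sq
          (Filter.Eventually.of_forall fun ω => by positivity)).symm
    _ ≤ ENNReal.ofReal ε := by
        apply ENNReal.ofReal_le_ofReal
        rw [integral_div]
        calc (∫ ω, (f i ω) ^ 2 ∂P) / (C : ℝ) ≤ K / (C : ℝ) := by gcongr; exact hK i
          _ ≤ ε := hKC

/-- If `(U_n, W_n) -> (U, W)` a.s. with uniformly bounded second moments of the `U`'s,
then for every bounded continuous `h`,
`E[h(U_n + W_n) * E[U_n | U_n + W_n]] -> E[h(U+W) * E[U | U+W]]`. -/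
theorem stmt11 {Ω : Type*} [MeasurableSpace Ω] (P : Measure Ω) [IsProbabilityMeasure P]
    (U W : ℕ → Ω → ℝ) (U₀ W₀ : Ω → ℝ)
    (hUm : ∀ n, Measurable (U n)) (hWm : ∀ n, Measurable (W n))
    (hU₀m : Measurable U₀) (hW₀m : Measurable W₀)
    (has : ∀ᵐ ω ∂P, Tendsto (fun n => (U n ω, W n ω)) atTop (nhds (U₀ ω, W₀ ω)))
    (hU2 : ∀ n, MemLp (U n) 2 P) (hU₀2 : MemLp U₀ 2 P)
    (M : ℝ) (hM : ∀ n, ∫ ω, (U n ω) ^ 2 ∂P ≤ M) (hM₀ : ∫ ω, (U₀ ω) ^ 2 ∂P ≤ M)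
    (h : BoundedContinuousFunction ℝ ℝ) :
    Tendsto (fun n => ∫ ω, h (U n ω + W n ω) *
        (P[U n | MeasurableSpace.comap (fun ω => U n ω + W n ω) inferInstance]) ω ∂P)
      atTop
      (nhds (∫ ω, h (U₀ ω + W₀ ω) *
        (P[U₀ | MeasurableSpace.comap (fun ω => U₀ ω + W₀ ω) inferInstance]) ω ∂P)) := by
  have hSm : ∀ n, Measurable (fun ω => U n ω + W n ω) := fun n => (hUm n).add (hWm n)
  have hS₀m : Measurable (fun ω => U₀ ω + W₀ ω) := hU₀m.add hW₀m
  have e : ∀ n, (∫ ω, h (U n ω + W n ω) *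
      (P[U n | MeasurableSpace.comap (fun ω => U n ω + W n ω) inferInstance]) ω ∂P)
      = ∫ ω, h (U n ω + W n ω) * U n ω ∂P := fun n =>
    myKeyEq P (U n) (fun ω => U n ω + W n ω) (hUm n) (hSm n) (hU2 n) h
  have e₀ : (∫ ω, h (U₀ ω + W₀ ω) *
      (P[U₀ | MeasurableSpace.comap (fun ω => U₀ ω + W₀ ω) inferInstance]) ω ∂P)
      = ∫ ω, h (U₀ ω + W₀ ω) * U₀ ω ∂P :=
    myKeyEq P U₀ (fun ω => U₀ ω + W₀ ω) hU₀m hS₀m hU₀2 h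
  simp only [e, e₀]
  set f : ℕ → Ω → ℝ := fun n ω => h (U n ω + W n ω) * U n ω with hf_def
  set g : Ω → ℝ := fun ω => h (U₀ ω + W₀ ω) * U₀ ω with hg_def
  have hfm : ∀ n, AEStronglyMeasurable (f n) P := fun n =>
    ((h.continuous.measurable.comp (hSm n)).mul (hUm n)).aestronglyMeasurable
  have hbd : ∀ n ω, ‖f n ω‖ ≤ ‖h‖ * ‖U n ω‖ := by
    intro n ω
    rw [hf_def]
    simp only [norm_mul]
    exact mul_le_mul_of_nonneg_right (h.norm_coe_le_norm _) (norm_nonneg _)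
  have hf2 : ∀ n, MemLp (f n) 2 P := fun n =>
    (hU2 n).of_le_mul (hfm n) (Filter.Eventually.of_forall (hbd n))
  have hgbd : ∀ ω, ‖g ω‖ ≤ ‖h‖ * ‖U₀ ω‖ := by
    intro ω
    rw [hg_def]
    simp only [norm_mul]
    exact mul_le_mul_of_nonneg_right (h.norm_coe_le_norm _) (norm_nonneg _)
  have hg2 : MemLp g 2 P :=
    hU₀2.of_le_mul ((h.continuous.measurable.comp hS₀m).mul hU₀m).aestronglyMeasurable
      (Filter.Eventually.of_forall hgbd)
  have hMnn : 0 ≤ M := le_trans (integral_nonneg fun ω => sq_nonneg _) hM₀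
  have hKf : ∀ n, ∫ ω, (f n ω) ^ 2 ∂P ≤ ‖h‖ ^ 2 * M := by
    intro n
    have hi1 : Integrable (fun ω => (f n ω) ^ 2) P := (hf2 n).integrable_sq
    have hi2 : Integrable (fun ω => ‖h‖ ^ 2 * (U n ω) ^ 2) P :=
      ((hU2 n).integrable_sq).const_mul _
    calc ∫ ω, (f n ω) ^ 2 ∂P ≤ ∫ ω, ‖h‖ ^ 2 * (U n ω) ^ 2 ∂P := by
          apply integral_mono hi1 hi2
          intro ω
          calc (f n ω) ^ 2 = ‖f n ω‖ ^ 2 := (sq_abs _).symm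
            _ ≤ (‖h‖ * ‖U n ω‖) ^ 2 := by
                apply sq_le_sq' _ (hbd n ω)
                calc -(‖h‖ * ‖U n ω‖) ≤ 0 := neg_nonpos_of_nonneg (by positivity)
                  _ ≤ ‖f n ω‖ := norm_nonneg _
            _ = ‖h‖ ^ 2 * ‖U n ω‖ ^ 2 := mul_pow _ _ _
            _ = ‖h‖ ^ 2 * (U n ω) ^ 2 := by rw [Real.norm_eq_abs, sq_abs]
      _ = ‖h‖ ^ 2 * ∫ ω, (U n ω) ^ 2 ∂P := integral_const_mul _ _
      _ ≤ ‖h‖ ^ 2 * M := mul_le_mul_of_nonneg_left (hM n) (by positivity)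
  have hui : UnifIntegrable f 1 P := myUI P hfm hf2 (‖h‖ ^ 2 * M) hKf
  have htend : ∀ᵐ ω ∂P, Tendsto (fun n => f n ω) atTop (nhds (g ω)) := by
    filter_upwards [has] with ω hω
    have hcont : Continuous (fun p : ℝ × ℝ => h (p.1 + p.2) * p.1) :=
      (h.continuous.comp continuous_add).mul continuous_fst
    exact (hcont.tendsto _).comp hω
  have hL1 : Tendsto (fun n => eLpNorm (f n - g) 1 P) atTop (nhds 0) :=
    tendsto_Lp_finite_of_tendsto_ae le_rfl ENNReal.one_ne_top hfm
      (hg2.mono_exponent one_le_two) hui htend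
  exact tendsto_integral_of_L1' g (hg2.integrable one_le_two).1
    (Filter.Eventually.of_forall fun n => (hf2 n).integrable one_le_two) hL1
end

section
/- Let T_n, T be random variables with sup_n E[T_n²] ≤ M and E[T²] ≤ M, and suppose S is a random variable such that E[h(S) T_n] → E[h(S) T] for all bounded continuous h. Then the same convergence E[h(S) T_n] → E[h(S) T] holds for all bounded Borel measurable h: ℝ → ℝ. -/
open MeasureTheory ProbabilityTheory Filter

lemma cs_aux {Ω : Type*} [MeasurableSpace Ω] (P : Measure Ω) (f g : Ω → ℝ)
    (hf : MemLp f 2 P) (hg : MemLp g 2 P) :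
    |∫ ω, f ω * g ω ∂P| ≤ (eLpNorm f 2 P).toReal * (eLpNorm g 2 P).toReal := by
  set F := hf.toLp f
  set G := hg.toLp g
  have h1 : ∫ ω, f ω * g ω ∂P = @inner ℝ _ _ F G := by
    rw [MeasureTheory.L2.inner_def]
    apply integral_congr_ae
    filter_upwards [hf.coeFn_toLp, hg.coeFn_toLp] with ω h1 h2
    simp [F, G, h1, h2, RCLike.inner_apply, mul_comm]
  rw [h1, ← Lp.norm_toLp f hf, ← Lp.norm_toLp g hg]
  exact abs_real_inner_le_norm F G

lemma norm_le_sqrt_aux {Ω : Type*} [MeasurableSpace Ω] (P : Measure Ω) (g : Ω → ℝ)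
    (hg : MemLp g 2 P) (M : ℝ) (hM : ∫ ω, (g ω) ^ 2 ∂P ≤ M) :
    (eLpNorm g 2 P).toReal ≤ Real.sqrt M := by
  set G := hg.toLp g
  have h1 : ‖G‖ ^ 2 = ∫ ω, (g ω) ^ 2 ∂P := by
    rw [← real_inner_self_eq_norm_sq, MeasureTheory.L2.inner_def]
    apply (integral_congr_ae ?_)
    · filter_upwards [hg.coeFn_toLp] with ω h
      simp [G, h, RCLike.inner_apply, sq]
  have h2 : ‖G‖ ≤ Real.sqrt M := Real.le_sqrt_of_sq_le (h1 ▸ hM)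
  rwa [← Lp.norm_toLp g hg]

/-- If `sup_n E[T_n^2] <= M`, `E[T^2] <= M`, and `E[h(S) T_n] -> E[h(S) T]` for every
bounded continuous `h`, then the same convergence holds for every bounded Borel `h`. -/
theorem stmt12 {Ω : Type*} [MeasurableSpace Ω] (P : Measure Ω) [IsProbabilityMeasure P]
    (T : ℕ → Ω → ℝ) (T₀ : Ω → ℝ) (S : Ω → ℝ) (hS : Measurable S)
    (hT2 : ∀ n, MemLp (T n) 2 P) (hT₀2 : MemLp T₀ 2 P)
    (M : ℝ) (hM : ∀ n, ∫ ω, (T n ω) ^ 2 ∂P ≤ M) (hM₀ : ∫ ω, (T₀ ω) ^ 2 ∂P ≤ M)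
    (hbc : ∀ h : BoundedContinuousFunction ℝ ℝ,
      Tendsto (fun n => ∫ ω, h (S ω) * T n ω ∂P) atTop (nhds (∫ ω, h (S ω) * T₀ ω ∂P))) :
    ∀ h : ℝ → ℝ, Measurable h → (∃ C : ℝ, ∀ x, |h x| ≤ C) →
      Tendsto (fun n => ∫ ω, h (S ω) * T n ω ∂P) atTop
        (nhds (∫ ω, h (S ω) * T₀ ω ∂P)) := by
  rintro h hmeas ⟨C, hC⟩
  set ν := P.map S with hνdef
  haveI : IsProbabilityMeasure ν := Measure.isProbabilityMeasure_map hS.aemeasurable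
  have hM0 : (0:ℝ) ≤ M := le_trans (integral_nonneg fun ω => sq_nonneg _) hM₀
  have hhν : MemLp h 2 ν :=
    MemLp.of_bound hmeas.aestronglyMeasurable C (ae_of_all _ fun x => by
      simpa [Real.norm_eq_abs] using hC x)
  rw [Metric.tendsto_atTop]
  intro ε hε
  set δ : ℝ := ε / (3 * (Real.sqrt M + 1)) with hδdef
  have hδ : 0 < δ := by positivity
  have hdense := BoundedContinuousFunction.toLp_denseRange ℝ ν (p := 2) ℝ
    (by norm_num : (2 : ENNReal) ≠ ⊤)
  obtain ⟨g, hg⟩ := Metric.denseRange_iff.mp hdense (hhν.toLp h) δ hδ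
  -- the L² distance between h∘S and g∘S under P is < δ
  have hcomp : ∀ x : Ω, (fun y => h y - g y) (S x) = h (S x) - g (S x) := fun x => rfl
  have hgm : MemLp (fun y => g y) 2 ν :=
    MemLp.of_bound g.continuous.measurable.aestronglyMeasurable ‖g‖
      (ae_of_all _ fun x => g.norm_coe_le_norm x)
  have hsm : AEStronglyMeasurable (fun y => h y - g y) ν :=
    (hmeas.sub g.continuous.measurable).aestronglyMeasurable
  have heq1 : eLpNorm (fun ω => h (S ω) - g (S ω)) 2 P
      = eLpNorm (fun y => h y - g y) 2 ν := by
    rw [hνdef, eLpNorm_map_measure hsm hS.aemeasurable]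
    rfl
  have heq2 : eLpNorm (fun y => h y - g y) 2 ν
      = eLpNorm (⇑(hhν.toLp h - (BoundedContinuousFunction.toLp 2 ν ℝ) g)) 2 ν := by
    apply eLpNorm_congr_ae
    filter_upwards [Lp.coeFn_sub (hhν.toLp h) ((BoundedContinuousFunction.toLp 2 ν ℝ) g),
      hhν.coeFn_toLp, BoundedContinuousFunction.coeFn_toLp 2 ν ℝ g] with x h1 h2 h3
    rw [h1, Pi.sub_apply, h2, h3]
  have hkey : (eLpNorm (fun ω => h (S ω) - g (S ω)) 2 P).toReal < δ := by
    rw [heq1, heq2]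
    rw [dist_eq_norm, Lp.norm_def] at hg
    exact hg
  -- MemLp facts under P
  have hhSP : MemLp (fun ω => h (S ω)) 2 P :=
    MemLp.of_bound (hmeas.comp hS).aestronglyMeasurable C
      (ae_of_all _ fun x => by simpa [Real.norm_eq_abs] using hC (S x))
  have hgSP : MemLp (fun ω => g (S ω)) 2 P :=
    MemLp.of_bound ((g.continuous.measurable.comp hS)).aestronglyMeasurable ‖g‖
      (ae_of_all _ fun x => g.norm_coe_le_norm (S x))
  -- key bound for any T' with second moment ≤ M
  have key : ∀ T' : Ω → ℝ, MemLp T' 2 P → (∫ ω, (T' ω) ^ 2 ∂P) ≤ M →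
      |(∫ ω, h (S ω) * T' ω ∂P) - ∫ ω, g (S ω) * T' ω ∂P| < ε / 3 := by
    intro T' hT' hMT'
    have hint : Integrable T' P := hT'.integrable one_le_two
    have hint1 : Integrable (fun ω => h (S ω) * T' ω) P :=
      hint.bdd_mul (hmeas.comp hS).aestronglyMeasurable
        (ae_of_all _ fun x => by simpa [Real.norm_eq_abs] using hC (S x))
    have hint2 : Integrable (fun ω => g (S ω) * T' ω) P :=
      hint.bdd_mul ((g.continuous.measurable.comp hS)).aestronglyMeasurable
        (ae_of_all _ fun x => g.norm_coe_le_norm (S x))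
    have hsub : (∫ ω, h (S ω) * T' ω ∂P) - ∫ ω, g (S ω) * T' ω ∂P
        = ∫ ω, (h (S ω) - g (S ω)) * T' ω ∂P := by
      rw [← integral_sub hint1 hint2]
      congr 1; ext ω; ring
    rw [hsub]
    calc |∫ ω, (h (S ω) - g (S ω)) * T' ω ∂P|
        ≤ (eLpNorm (fun ω => h (S ω) - g (S ω)) 2 P).toReal
            * (eLpNorm T' 2 P).toReal := cs_aux P _ _ (hhSP.sub hgSP) hT'
      _ ≤ (eLpNorm (fun ω => h (S ω) - g (S ω)) 2 P).toReal * Real.sqrt M :=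
          mul_le_mul_of_nonneg_left (norm_le_sqrt_aux P T' hT' M hMT') ENNReal.toReal_nonneg
      _ ≤ (eLpNorm (fun ω => h (S ω) - g (S ω)) 2 P).toReal * (Real.sqrt M + 1) :=
          mul_le_mul_of_nonneg_left (by linarith) ENNReal.toReal_nonneg
      _ < δ * (Real.sqrt M + 1) :=
          mul_lt_mul_of_pos_right hkey (by positivity)
      _ = ε / 3 := by
          rw [hδdef]; field_simp
  -- convergence for g
  have hgconv := hbc g
  rw [Metric.tendsto_atTop] at hgconv
  obtain ⟨N, hN⟩ := hgconv (ε / 3) (by positivity)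
  refine ⟨N, fun n hn => ?_⟩
  have h1 := key (T n) (hT2 n) (hM n)
  have h2 := key T₀ hT₀2 hM₀
  have h3 := hN n hn
  rw [Real.dist_eq] at h3 ⊢
  calc |(∫ ω, h (S ω) * T n ω ∂P) - ∫ ω, h (S ω) * T₀ ω ∂P|
      ≤ |(∫ ω, h (S ω) * T n ω ∂P) - ∫ ω, g (S ω) * T n ω ∂P|
        + |(∫ ω, g (S ω) * T n ω ∂P) - ∫ ω, g (S ω) * T₀ ω ∂P|
        + |(∫ ω, g (S ω) * T₀ ω ∂P) - ∫ ω, h (S ω) * T₀ ω ∂P| := by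
          have := abs_sub_le (∫ ω, h (S ω) * T n ω ∂P) (∫ ω, g (S ω) * T₀ ω ∂P)
            (∫ ω, h (S ω) * T₀ ω ∂P)
          have := abs_sub_le (∫ ω, h (S ω) * T n ω ∂P) (∫ ω, g (S ω) * T n ω ∂P)
            (∫ ω, g (S ω) * T₀ ω ∂P)
          linarith [abs_sub_le (∫ ω, h (S ω) * T n ω ∂P) (∫ ω, g (S ω) * T n ω ∂P)
            (∫ ω, h (S ω) * T₀ ω ∂P),
            abs_sub_le (∫ ω, g (S ω) * T n ω ∂P) (∫ ω, g (S ω) * T₀ ω ∂P)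
            (∫ ω, h (S ω) * T₀ ω ∂P)]
    _ < ε / 3 + ε / 3 + ε / 3 := by
        have h2' : |(∫ ω, g (S ω) * T₀ ω ∂P) - ∫ ω, h (S ω) * T₀ ω ∂P| < ε / 3 := by
          rw [abs_sub_comm]; exact h2
        linarith
    _ = ε := by ring
end

section
/- Let X, Y, Z be independent real random variables with Z absolutely continuous having an everywhere-positive density, and let f₁, f₂ be Borel functions with P(f₁(X+Y+Z) = f₂(X+Y)) = 1. Then f₁ is constant Lebesgue-almost everywhere, and hence f₁(X+Y+Z) is almost surely constant. -/
open MeasureTheory ProbabilityTheory Filter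

/-- If `X, Y, Z` are independent, `Z` has an everywhere-positive density with respect to
Lebesgue measure, and `f₁(X+Y+Z) = f₂(X+Y)` a.s., then `f₁` is constant Lebesgue-a.e. and
`f₁(X+Y+Z)` is a.s. constant. -/
theorem stmt15 {Ω : Type*} [MeasurableSpace Ω] (P : Measure Ω) [IsProbabilityMeasure P]
    (X Y Z : Ω → ℝ) (hXm : Measurable X) (hYm : Measurable Y) (hZm : Measurable Z)
    (hXY : IndepFun X Y P)
    (hZXY : IndepFun Z (fun ω => (X ω, Y ω)) P)
    (d : ℝ → ENNReal) (hd : Measurable d) (hdpos : ∀ x, 0 < d x)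
    (hZd : Measure.map Z P = MeasureTheory.volume.withDensity d)
    (f₁ f₂ : ℝ → ℝ) (hf₁ : Measurable f₁) (hf₂ : Measurable f₂)
    (heq : ∀ᵐ ω ∂P, f₁ (X ω + Y ω + Z ω) = f₂ (X ω + Y ω)) :
    ∃ c : ℝ, (∀ᵐ x ∂(MeasureTheory.volume : Measure ℝ), f₁ x = c) ∧
      (∀ᵐ ω ∂P, f₁ (X ω + Y ω + Z ω) = c) := by
  set W := fun ω => X ω + Y ω with hWdef
  have hWm : Measurable W := hXm.add hYm
  have hWZ : IndepFun W Z P :=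
    (hZXY.comp measurable_id (measurable_fst.add measurable_snd)).symm
  haveI : IsProbabilityMeasure (P.map W) := Measure.isProbabilityMeasure_map hWm.aemeasurable
  haveI : IsProbabilityMeasure (P.map Z) := Measure.isProbabilityMeasure_map hZm.aemeasurable
  have hmap : P.map (fun ω => (W ω, Z ω)) = (P.map W).prod (P.map Z) :=
    (indepFun_iff_map_prod_eq_prod_map_map hWm.aemeasurable hZm.aemeasurable).mp hWZ
  have hvac : (volume : Measure ℝ) ≪ P.map Z := by
    rw [hZd]
    exact withDensity_absolutelyContinuous' hd.aemeasurable
      (Eventually.of_forall fun x => (hdpos x).ne')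
  have hacv : P.map Z ≪ (volume : Measure ℝ) := by
    rw [hZd]; exact withDensity_absolutelyContinuous _ _
  have hpairm : Measurable (fun ω => (W ω, Z ω)) := hWm.prodMk hZm
  have hmeas : MeasurableSet {p : ℝ × ℝ | f₁ (p.1 + p.2) = f₂ p.1} :=
    measurableSet_eq_fun (hf₁.comp (measurable_fst.add measurable_snd))
      (hf₂.comp measurable_fst)
  have h1 : ∀ᵐ p ∂ (P.map W).prod (P.map Z), f₁ (p.1 + p.2) = f₂ p.1 := by
    rw [← hmap, ae_map_iff hpairm.aemeasurable hmeas]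
    filter_upwards [heq] with ω h using h
  have h2 : ∀ᵐ w ∂ P.map W, ∀ᵐ z ∂ P.map Z, f₁ (w + z) = f₂ w :=
    Measure.ae_ae_of_ae_prod h1
  obtain ⟨w₀, hw₀⟩ := h2.exists
  set c := f₂ w₀ with hc
  have hv : ∀ᵐ z ∂(volume : Measure ℝ), f₁ (w₀ + z) = c := hvac.ae_le hw₀
  have hsetc : MeasurableSet {x : ℝ | f₁ x = c} :=
    measurableSet_eq_fun hf₁ measurable_const
  have hvol : ∀ᵐ x ∂(volume : Measure ℝ), f₁ x = c := by
    have hmp := measurePreserving_add_left (volume : Measure ℝ) w₀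
    rw [← hmp.map_eq, ae_map_iff (measurable_const_add w₀).aemeasurable hsetc]
    exact hv
  refine ⟨c, hvol, ?_⟩
  have hvw : ∀ w : ℝ, ∀ᵐ z ∂ P.map Z, f₁ (w + z) = c := by
    intro w
    refine hacv.ae_le ?_
    have hmp := measurePreserving_add_left (volume : Measure ℝ) w
    have : ∀ᵐ x ∂ ((volume : Measure ℝ).map (fun z => w + z)), f₁ x = c := by
      rw [hmp.map_eq]; exact hvol
    rwa [ae_map_iff (measurable_const_add w).aemeasurable hsetc] at this
  have hmeas2 : MeasurableSet {p : ℝ × ℝ | f₁ (p.1 + p.2) = c} :=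
    measurableSet_eq_fun (hf₁.comp (measurable_fst.add measurable_snd)) measurable_const
  have hprod : ∀ᵐ p ∂ (P.map W).prod (P.map Z), f₁ (p.1 + p.2) = c :=
    (Measure.ae_prod_iff_ae_ae hmeas2).mpr (Eventually.of_forall hvw)
  have : ∀ᵐ p ∂ P.map (fun ω => (W ω, Z ω)), f₁ (p.1 + p.2) = c := by
    rw [hmap]; exact hprod
  rw [ae_map_iff hpairm.aemeasurable hmeas2] at this
  exact this
end
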